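/- For all integers $a \geq 2$ and $r \geq 2$, letting $x_\star = \frac{\log((a+1)/a)}{\log\left(\frac{(a+1)^{r+1}}{(a-1)^r a}\right)}$ and $R = 3$, we have $-\frac{\log(a/(a-1))}{\log((a+1)/a)} x_\star + \left(1 - \frac{R-1}{rR}\right)(1 - x_\star) \leq \frac{r-1+x_\star}{r}$. -/

import Mathlib

theorem exponent_comparison_R3 (a : ℤ) (r : ℕ) (ha : 2 ≤ a) (hr : 2 ≤ r) :
    -(Real.log ((a : ℝ) / ((a : ℝ) - 1)) / Real.log (((a : ℝ) + 1) / a)) *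
        (Real.log (((a : ℝ) + 1) / a) /
          Real.log (((a : ℝ) + 1) ^ (r + 1) / (((a : ℝ) - 1) ^ r * a))) +
      (1 - ((3 : ℝ) - 1) / ((r : ℝ) * 3)) *
        (1 - Real.log (((a : ℝ) + 1) / a) /
          Real.log (((a : ℝ) + 1) ^ (r + 1) / (((a : ℝ) - 1) ^ r * a)))
      ≤ ((r : ℝ) - 1 +
          Real.log (((a : ℝ) + 1) / a) /
            Real.log (((a : ℝ) + 1) ^ (r + 1) / (((a : ℝ) - 1) ^ r * a))) / r := by
  have hA : (2 : ℝ) ≤ (a : ℝ) := by exact_mod_cast ha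
  have h1 : (0 : ℝ) < (a : ℝ) - 1 := by linarith
  have h2 : (0 : ℝ) < (a : ℝ) := by linarith
  have h3 : (0 : ℝ) < (a : ℝ) + 1 := by linarith
  set p := Real.log ((a : ℝ) - 1) with hp
  set q := Real.log (a : ℝ) with hq
  set s := Real.log ((a : ℝ) + 1) with hs
  have hpq : p < q := Real.log_lt_log h1 (by linarith)
  have hqs : q < s := Real.log_lt_log h2 (by linarith)
  have e1 : Real.log ((a : ℝ) / ((a : ℝ) - 1)) = q - p := Real.log_div h2.ne' h1.ne'
  have e2 : Real.log (((a : ℝ) + 1) / (a : ℝ)) = s - q := Real.log_div h3.ne' h2.ne'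
  have e3 : Real.log (((a : ℝ) + 1) ^ (r + 1) / (((a : ℝ) - 1) ^ r * (a : ℝ)))
      = ((r : ℝ) + 1) * s - ((r : ℝ) * p + q) := by
    rw [Real.log_div (by positivity) (by positivity), Real.log_mul (by positivity) h2.ne',
      Real.log_pow, Real.log_pow]
    push_cast
    ring
  rw [e1, e2, e3]
  have hr' : (2 : ℝ) ≤ (r : ℝ) := by exact_mod_cast hr
  have hL1 : (0 : ℝ) < s - q := by linarith
  have hL2 : (0 : ℝ) < q - p := by linarith
  have hD : (0 : ℝ) < ((r : ℝ) + 1) * s - ((r : ℝ) * p + q) := by nlinarith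
  have hrp : (0 : ℝ) < (r : ℝ) := by linarith
  have hne1 : s - q ≠ 0 := hL1.ne'
  have hneD : ((r : ℝ) + 1) * s - ((r : ℝ) * p + q) ≠ 0 := hD.ne'
  rw [← sub_nonneg]
  have heq : ((r : ℝ) - 1 + (s - q) / ((↑r + 1) * s - (↑r * p + q))) / ↑r -
      (-((q - p) / (s - q)) * ((s - q) / ((↑r + 1) * s - (↑r * p + q))) +
        (1 - ((3:ℝ) - 1) / (↑r * 3)) * (1 - (s - q) / ((↑r + 1) * s - (↑r * p + q)))) =
      2 * (s - p) / (3 * ((↑r + 1) * s - (↑r * p + q))) := by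
    have hX : (r:ℝ) * (s - p) + (s - q) ≠ 0 := by intro h; apply hneD; linarith
    rw [show ((↑r + 1) * s - (↑r * p + q)) = (r:ℝ) * (s - p) + (s - q) by ring]
    field_simp
    ring
  rw [heq]
  have hsp : (0:ℝ) < s - p := by linarith
  positivity
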